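/- Let 𝒴 ⊂ ℝ be a finite set, let 𝒜, 𝒢₁, 𝒢₂, ℬ₂ be finite types, let p be a strictly positive probability mass function on 𝒴 × 𝒜 × 𝒢₁ × 𝒢₂ × ℬ₂, and fix a ∈ 𝒜. If G₂ ⊥ (A, G₁) | B₂ under p, then for every (g₂, b₂): ∑_{(y,a′,g₁)} p(y,a′,g₁ | g₂,b₂) · ( ψ_a^{G₁,B₂}(y,a′,g₁,b₂) − ψ_a^{G₁,(G₂,B₂)}(y,a′,g₁,g₂,b₂) ) = 0; that is, the difference of the two influence functions has vanishing conditional expectation given (G₂, B₂). -/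

import Mathlib

open Finset

noncomputable section

variable {Y : Finset ℝ} {A G₁ G₂ B₂ : Type}
variable [Fintype A] [Fintype G₁] [Fintype G₂] [Fintype B₂] [DecidableEq A]

/-- Marginal `p(g₁)`. -/
def pG1 (p : Y × A × G₁ × G₂ × B₂ → ℝ) (g₁ : G₁) : ℝ :=
  ∑ y : Y, ∑ a : A, ∑ g₂ : G₂, ∑ b₂ : B₂, p (y, a, g₁, g₂, b₂)

/-- Marginal `p(g₂)`. -/
def pG2 (p : Y × A × G₁ × G₂ × B₂ → ℝ) (g₂ : G₂) : ℝ :=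
  ∑ y : Y, ∑ a : A, ∑ g₁ : G₁, ∑ b₂ : B₂, p (y, a, g₁, g₂, b₂)

/-- Marginal `p(b₂)`. -/
def pB2 (p : Y × A × G₁ × G₂ × B₂ → ℝ) (b₂ : B₂) : ℝ :=
  ∑ y : Y, ∑ a : A, ∑ g₁ : G₁, ∑ g₂ : G₂, p (y, a, g₁, g₂, b₂)

/-- Marginal `p(g₂, b₂)`. -/
def pG2B2 (p : Y × A × G₁ × G₂ × B₂ → ℝ) (g₂ : G₂) (b₂ : B₂) : ℝ :=
  ∑ y : Y, ∑ a : A, ∑ g₁ : G₁, p (y, a, g₁, g₂, b₂)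

/-- Marginal `p(a, g₁, b₂)`. -/
def pAG1B2 (p : Y × A × G₁ × G₂ × B₂ → ℝ) (a : A) (g₁ : G₁) (b₂ : B₂) : ℝ :=
  ∑ y : Y, ∑ g₂ : G₂, p (y, a, g₁, g₂, b₂)

/-- Marginal `p(a, g₁, g₂, b₂)`. -/
def pAG1G2B2 (p : Y × A × G₁ × G₂ × B₂ → ℝ) (a : A) (g₁ : G₁) (g₂ : G₂) (b₂ : B₂) : ℝ :=
  ∑ y : Y, p (y, a, g₁, g₂, b₂)

/-- Marginal `p(a, g₁, g₂)`. -/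
def pAG1G2 (p : Y × A × G₁ × G₂ × B₂ → ℝ) (a : A) (g₁ : G₁) (g₂ : G₂) : ℝ :=
  ∑ y : Y, ∑ b₂ : B₂, p (y, a, g₁, g₂, b₂)

/-- Outcome regression `m₁(g₁,b₂) = ∑_y y·p(y | a, g₁, b₂)` for the
adjustment set `(G₁, B₂)`. -/
def m1 (p : Y × A × G₁ × G₂ × B₂ → ℝ) (a : A) (g₁ : G₁) (b₂ : B₂) : ℝ :=
  ∑ y : Y, (y : ℝ) * ((∑ g₂ : G₂, p (y, a, g₁, g₂, b₂)) / pAG1B2 p a g₁ b₂)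

/-- Outcome regression `m₂(g₁,g₂,b₂) = ∑_y y·p(y | a, g₁, g₂, b₂)` for the
adjustment set `(G₁, (G₂, B₂))`. -/
def m2 (p : Y × A × G₁ × G₂ × B₂ → ℝ) (a : A) (g₁ : G₁) (g₂ : G₂) (b₂ : B₂) : ℝ :=
  ∑ y : Y, (y : ℝ) * (p (y, a, g₁, g₂, b₂) / pAG1G2B2 p a g₁ g₂ b₂)

/-- Outcome regression `m₃(g₁,g₂) = ∑_y y·p(y | a, g₁, g₂)` for the
adjustment set `(G₁, G₂)`. -/
def m3 (p : Y × A × G₁ × G₂ × B₂ → ℝ) (a : A) (g₁ : G₁) (g₂ : G₂) : ℝ :=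
  ∑ y : Y, (y : ℝ) * ((∑ b₂ : B₂, p (y, a, g₁, g₂, b₂)) / pAG1G2 p a g₁ g₂)

/-- Target parameter for the adjustment set `(G₁, B₂)`. -/
def T1 (p : Y × A × G₁ × G₂ × B₂ → ℝ) (a : A) : ℝ :=
  ∑ g₁ : G₁, pG1 p g₁ * ∑ b₂ : B₂, pB2 p b₂ * m1 p a g₁ b₂

/-- Target parameter for the adjustment set `(G₁, (G₂, B₂))`. -/
def T2 (p : Y × A × G₁ × G₂ × B₂ → ℝ) (a : A) : ℝ :=
  ∑ g₁ : G₁, pG1 p g₁ * ∑ g₂ : G₂, ∑ b₂ : B₂, pG2B2 p g₂ b₂ * m2 p a g₁ g₂ b₂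

/-- Target parameter for the adjustment set `(G₁, G₂)`. -/
def T3 (p : Y × A × G₁ × G₂ × B₂ → ℝ) (a : A) : ℝ :=
  ∑ g₁ : G₁, pG1 p g₁ * ∑ g₂ : G₂, pG2 p g₂ * m3 p a g₁ g₂

/-- Influence function `ψ_a^{G₁,B₂}` for the adjustment set `(G₁, B₂)`. -/
def psi1 (p : Y × A × G₁ × G₂ × B₂ → ℝ) (a : A)
    (y : Y) (a' : A) (g₁ : G₁) (b₂ : B₂) : ℝ :=
  (if a' = a then (1 : ℝ) else 0) * (pG1 p g₁ * pB2 p b₂ / pAG1B2 p a g₁ b₂) *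
      ((y : ℝ) - m1 p a g₁ b₂)
    + (∑ b₂' : B₂, pB2 p b₂' * m1 p a g₁ b₂')
    + (∑ g₁' : G₁, pG1 p g₁' * m1 p a g₁' b₂)
    - 2 * T1 p a

/-- Influence function `ψ_a^{G₁,(G₂,B₂)}` for the adjustment set `(G₁, (G₂, B₂))`. -/
def psi2 (p : Y × A × G₁ × G₂ × B₂ → ℝ) (a : A)
    (y : Y) (a' : A) (g₁ : G₁) (g₂ : G₂) (b₂ : B₂) : ℝ :=
  (if a' = a then (1 : ℝ) else 0) *
      (pG1 p g₁ * pG2B2 p g₂ b₂ / pAG1G2B2 p a g₁ g₂ b₂) *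
      ((y : ℝ) - m2 p a g₁ g₂ b₂)
    + (∑ g₂' : G₂, ∑ b₂' : B₂, pG2B2 p g₂' b₂' * m2 p a g₁ g₂' b₂')
    + (∑ g₁' : G₁, pG1 p g₁' * m2 p a g₁' g₂ b₂)
    - 2 * T2 p a

/-- Influence function `ψ_a^{G₁,G₂}` for the adjustment set `(G₁, G₂)`. -/
def psi3 (p : Y × A × G₁ × G₂ × B₂ → ℝ) (a : A)
    (y : Y) (a' : A) (g₁ : G₁) (g₂ : G₂) : ℝ :=
  (if a' = a then (1 : ℝ) else 0) * (pG1 p g₁ * pG2 p g₂ / pAG1G2 p a g₁ g₂) *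
      ((y : ℝ) - m3 p a g₁ g₂)
    + (∑ g₂' : G₂, pG2 p g₂' * m3 p a g₁ g₂')
    + (∑ g₁' : G₁, pG1 p g₁' * m3 p a g₁' g₂)
    - 2 * T3 p a

/-- Conditional independence `G₂ ⊥ (A, G₁) | B₂` under `p`. -/
def CI_G2_AG1_B2 (p : Y × A × G₁ × G₂ × B₂ → ℝ) : Prop :=
  ∀ (g₂ : G₂) (a : A) (g₁ : G₁) (b₂ : B₂),
    (∑ y : Y, p (y, a, g₁, g₂, b₂)) / pB2 p b₂ =
      (pG2B2 p g₂ b₂ / pB2 p b₂) * (pAG1B2 p a g₁ b₂ / pB2 p b₂)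

/-- Conditional independence `Y ⊥ B₂ | (A, G₁, G₂)` under `p`. -/
def CI_Y_B2_AG1G2 (p : Y × A × G₁ × G₂ × B₂ → ℝ) : Prop :=
  ∀ (y : Y) (a : A) (g₁ : G₁) (g₂ : G₂) (b₂ : B₂),
    p (y, a, g₁, g₂, b₂) / pAG1G2 p a g₁ g₂ =
      ((∑ b₂' : B₂, p (y, a, g₁, g₂, b₂')) / pAG1G2 p a g₁ g₂) *
        (pAG1G2B2 p a g₁ g₂ b₂ / pAG1G2 p a g₁ g₂)

/-- Variance of a real function of the observation under `p`. -/
def VarP (p : Y × A × G₁ × G₂ × B₂ → ℝ) (f : Y × A × G₁ × G₂ × B₂ → ℝ) : ℝ :=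
  (∑ o : Y × A × G₁ × G₂ × B₂, p o * f o ^ 2) -
    (∑ o : Y × A × G₁ × G₂ × B₂, p o * f o) ^ 2

/-- First orthogonality condition in the proof of Lemma 4.1: given
`G₂ ⊥ (A, G₁) | B₂`, the difference of the two influence functions has
vanishing conditional expectation given `(G₂, B₂)`. -/
theorem psi_difference_condExp_G2B2
    (p : Y × A × G₁ × G₂ × B₂ → ℝ)
    (hpos : ∀ o, 0 < p o) (hsum : ∑ o, p o = 1) (a : A)
    (hCI : CI_G2_AG1_B2 p) :
    ∀ (g₂ : G₂) (b₂ : B₂),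
      ∑ y : Y, ∑ a' : A, ∑ g₁ : G₁,
        (p (y, a', g₁, g₂, b₂) / pG2B2 p g₂ b₂) *
          (psi1 p a y a' g₁ b₂ - psi2 p a y a' g₁ g₂ b₂) = 0 := by
  classical
  -- nonemptiness of all factor types
  have hne : Nonempty (Y × A × G₁ × G₂ × B₂) := by
    by_contra h
    rw [not_nonempty_iff] at h
    rw [Finset.univ_eq_empty, Finset.sum_empty] at hsum
    norm_num at hsum
  obtain ⟨⟨y0, a0, g10, g20, b20⟩⟩ := hne
  haveI : Nonempty Y := ⟨y0⟩
  haveI : Nonempty A := ⟨a0⟩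
  haveI : Nonempty G₁ := ⟨g10⟩
  haveI : Nonempty G₂ := ⟨g20⟩
  haveI : Nonempty B₂ := ⟨b20⟩
  -- positivity of marginals
  have hB2 : ∀ b, 0 < pB2 p b := by
    intro b; unfold pB2
    refine Finset.sum_pos (fun _ _ => ?_) Finset.univ_nonempty
    refine Finset.sum_pos (fun _ _ => ?_) Finset.univ_nonempty
    refine Finset.sum_pos (fun _ _ => ?_) Finset.univ_nonempty
    exact Finset.sum_pos (fun _ _ => hpos _) Finset.univ_nonempty
  have hG2B2 : ∀ g b, 0 < pG2B2 p g b := by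
    intro g b; unfold pG2B2
    refine Finset.sum_pos (fun _ _ => ?_) Finset.univ_nonempty
    refine Finset.sum_pos (fun _ _ => ?_) Finset.univ_nonempty
    exact Finset.sum_pos (fun _ _ => hpos _) Finset.univ_nonempty
  have hAG1B2 : ∀ a' g b, 0 < pAG1B2 p a' g b := by
    intro a' g b; unfold pAG1B2
    refine Finset.sum_pos (fun _ _ => ?_) Finset.univ_nonempty
    exact Finset.sum_pos (fun _ _ => hpos _) Finset.univ_nonempty
  have hAG1G2B2 : ∀ a' g gg b, 0 < pAG1G2B2 p a' g gg b := by
    intro a' g gg b; unfold pAG1G2B2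
    exact Finset.sum_pos (fun _ _ => hpos _) Finset.univ_nonempty
  -- the factorization coming from conditional independence
  have hfac : ∀ (g₂' : G₂) (a' : A) (g₁ : G₁) (b₂' : B₂),
      pAG1G2B2 p a' g₁ g₂' b₂' * pB2 p b₂' = pG2B2 p g₂' b₂' * pAG1B2 p a' g₁ b₂' := by
    intro g₂' a' g₁ b₂'
    have h := hCI g₂' a' g₁ b₂'
    have hsumy : (∑ y : Y, p (y, a', g₁, g₂', b₂')) = pAG1G2B2 p a' g₁ g₂' b₂' := rfl
    rw [hsumy] at h
    have hb := (hB2 b₂').ne'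
    field_simp at h
    exact mul_right_cancel₀ hb (by linear_combination (pB2 p b₂') * h)
  -- m2 times its denominator
  have hm2sum : ∀ (a' : A) (g₁ : G₁) (g₂' : G₂) (b₂' : B₂),
      (∑ y : Y, (y : ℝ) * p (y, a', g₁, g₂', b₂')) =
        pAG1G2B2 p a' g₁ g₂' b₂' * m2 p a' g₁ g₂' b₂' := by
    intro a' g₁ g₂' b₂'
    unfold m2
    rw [Finset.mul_sum]
    refine Finset.sum_congr rfl fun y _ => ?_
    have h := (hAG1G2B2 a' g₁ g₂' b₂').ne'
    field_simp
  -- m1 times its denominator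
  have hm1sum : ∀ (a' : A) (g₁ : G₁) (b₂' : B₂),
      (∑ g₂' : G₂, ∑ y : Y, (y : ℝ) * p (y, a', g₁, g₂', b₂')) =
        pAG1B2 p a' g₁ b₂' * m1 p a' g₁ b₂' := by
    intro a' g₁ b₂'
    unfold m1
    rw [Finset.mul_sum, Finset.sum_comm]
    refine Finset.sum_congr rfl fun y _ => ?_
    have h := (hAG1B2 a' g₁ b₂').ne'
    rw [← Finset.mul_sum]
    field_simp
  -- aggregated-regression identity: ∑_{g₂'} p(g₂',b₂') m2 = p(b₂') m1
  have hS : ∀ (g₁ : G₁) (b₂' : B₂),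
      (∑ g₂' : G₂, pG2B2 p g₂' b₂' * m2 p a g₁ g₂' b₂') = pB2 p b₂' * m1 p a g₁ b₂' := by
    intro g₁ b₂'
    have step : ∀ g₂' : G₂, pG2B2 p g₂' b₂' * m2 p a g₁ g₂' b₂' =
        (pB2 p b₂' / pAG1B2 p a g₁ b₂') * ∑ y : Y, (y : ℝ) * p (y, a, g₁, g₂', b₂') := by
      intro g₂'
      rw [hm2sum a g₁ g₂' b₂']
      have hf := hfac g₂' a g₁ b₂'
      have hb := (hAG1B2 a g₁ b₂').ne'
      rw [div_mul_eq_mul_div, eq_div_iff hb]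
      linear_combination (-(m2 p a g₁ g₂' b₂')) * hf
    rw [Finset.sum_congr rfl fun g₂' _ => step g₂', ← Finset.mul_sum, hm1sum a g₁ b₂']
    have hb := (hAG1B2 a g₁ b₂').ne'
    field_simp
  -- equality of the two target parameters
  have hT : T1 p a = T2 p a := by
    unfold T1 T2
    refine Finset.sum_congr rfl fun g₁ _ => ?_
    congr 1
    rw [Finset.sum_comm]
    exact (Finset.sum_congr rfl fun b _ => hS g₁ b).symm
  intro g₂ b₂
  -- pointwise simplification of the difference of influence functions
  have key : ∀ (y : Y) (a' : A) (g₁ : G₁),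
      psi1 p a y a' g₁ b₂ - psi2 p a y a' g₁ g₂ b₂ =
        (if a' = a then (1:ℝ) else 0) * (pG1 p g₁ * pB2 p b₂ / pAG1B2 p a g₁ b₂) *
            ((y : ℝ) - m1 p a g₁ b₂)
          - (if a' = a then (1:ℝ) else 0) *
              (pG1 p g₁ * pG2B2 p g₂ b₂ / pAG1G2B2 p a g₁ g₂ b₂) *
              ((y : ℝ) - m2 p a g₁ g₂ b₂)
          + (∑ g₁' : G₁, pG1 p g₁' * (m1 p a g₁' b₂ - m2 p a g₁' g₂ b₂)) := by
    intro y a' g₁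
    unfold psi1 psi2
    rw [hT]
    have h1 : (∑ g₂' : G₂, ∑ b₂' : B₂, pG2B2 p g₂' b₂' * m2 p a g₁ g₂' b₂') =
        ∑ b₂' : B₂, pB2 p b₂' * m1 p a g₁ b₂' := by
      rw [Finset.sum_comm]
      exact Finset.sum_congr rfl fun b _ => hS g₁ b
    rw [h1]
    simp only [mul_sub, Finset.sum_sub_distrib]
    ring
  -- total mass of the conditional distribution
  have htot : (∑ y : Y, ∑ a' : A, ∑ g₁ : G₁, p (y, a', g₁, g₂, b₂) / pG2B2 p g₂ b₂) = 1 := by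
    simp only [← Finset.sum_div]
    have : (∑ y : Y, ∑ a' : A, ∑ g₁ : G₁, p (y, a', g₁, g₂, b₂)) = pG2B2 p g₂ b₂ := rfl
    rw [this, div_self (hG2B2 g₂ b₂).ne']
  -- the m2 residual term has zero conditional mean given (a, g₁, g₂, b₂)
  have hres2 : ∀ g₁ : G₁,
      (∑ y : Y, p (y, a, g₁, g₂, b₂) * ((y : ℝ) - m2 p a g₁ g₂ b₂)) = 0 := by
    intro g₁
    simp only [mul_sub, Finset.sum_sub_distrib, ← Finset.sum_mul]
    have h1 : (∑ y : Y, p (y, a, g₁, g₂, b₂) * (y : ℝ)) =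
        pAG1G2B2 p a g₁ g₂ b₂ * m2 p a g₁ g₂ b₂ := by
      rw [← hm2sum a g₁ g₂ b₂]
      exact Finset.sum_congr rfl fun y _ => mul_comm _ _
    have h2 : (∑ y : Y, p (y, a, g₁, g₂, b₂)) = pAG1G2B2 p a g₁ g₂ b₂ := rfl
    rw [h1, h2]
    ring
  -- the m1 residual term
  have hres1 : ∀ g₁ : G₁,
      (∑ y : Y, p (y, a, g₁, g₂, b₂) * ((y : ℝ) - m1 p a g₁ b₂)) =
        pAG1G2B2 p a g₁ g₂ b₂ * (m2 p a g₁ g₂ b₂ - m1 p a g₁ b₂) := by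
    intro g₁
    simp only [mul_sub, Finset.sum_sub_distrib, ← Finset.sum_mul]
    have h1 : (∑ y : Y, p (y, a, g₁, g₂, b₂) * (y : ℝ)) =
        pAG1G2B2 p a g₁ g₂ b₂ * m2 p a g₁ g₂ b₂ := by
      rw [← hm2sum a g₁ g₂ b₂]
      exact Finset.sum_congr rfl fun y _ => mul_comm _ _
    have h2 : (∑ y : Y, p (y, a, g₁, g₂, b₂)) = pAG1G2B2 p a g₁ g₂ b₂ := rfl
    rw [h1, h2]
  -- rewrite the main sum using `key`
  calc
    (∑ y : Y, ∑ a' : A, ∑ g₁ : G₁,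
        (p (y, a', g₁, g₂, b₂) / pG2B2 p g₂ b₂) *
          (psi1 p a y a' g₁ b₂ - psi2 p a y a' g₁ g₂ b₂))
      = (∑ y : Y, ∑ a' : A, ∑ g₁ : G₁,
          ((p (y, a', g₁, g₂, b₂) / pG2B2 p g₂ b₂) *
              ((if a' = a then (1:ℝ) else 0) * (pG1 p g₁ * pB2 p b₂ / pAG1B2 p a g₁ b₂) *
                ((y : ℝ) - m1 p a g₁ b₂))
            - (p (y, a', g₁, g₂, b₂) / pG2B2 p g₂ b₂) *
              ((if a' = a then (1:ℝ) else 0) *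
                  (pG1 p g₁ * pG2B2 p g₂ b₂ / pAG1G2B2 p a g₁ g₂ b₂) *
                ((y : ℝ) - m2 p a g₁ g₂ b₂))
            + (p (y, a', g₁, g₂, b₂) / pG2B2 p g₂ b₂) *
              (∑ g₁' : G₁, pG1 p g₁' * (m1 p a g₁' b₂ - m2 p a g₁' g₂ b₂)))) := by
        refine Finset.sum_congr rfl fun y _ => Finset.sum_congr rfl fun a' _ =>
          Finset.sum_congr rfl fun g₁ _ => ?_
        rw [key y a' g₁]; ring
    _ = (∑ y : Y, ∑ a' : A, ∑ g₁ : G₁,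
          (p (y, a', g₁, g₂, b₂) / pG2B2 p g₂ b₂) *
            ((if a' = a then (1:ℝ) else 0) * (pG1 p g₁ * pB2 p b₂ / pAG1B2 p a g₁ b₂) *
              ((y : ℝ) - m1 p a g₁ b₂)))
        - (∑ y : Y, ∑ a' : A, ∑ g₁ : G₁,
          (p (y, a', g₁, g₂, b₂) / pG2B2 p g₂ b₂) *
            ((if a' = a then (1:ℝ) else 0) *
                (pG1 p g₁ * pG2B2 p g₂ b₂ / pAG1G2B2 p a g₁ g₂ b₂) *
              ((y : ℝ) - m2 p a g₁ g₂ b₂)))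
        + (∑ y : Y, ∑ a' : A, ∑ g₁ : G₁,
          (p (y, a', g₁, g₂, b₂) / pG2B2 p g₂ b₂)) *
            (∑ g₁' : G₁, pG1 p g₁' * (m1 p a g₁' b₂ - m2 p a g₁' g₂ b₂)) := by
        simp only [Finset.sum_add_distrib, Finset.sum_sub_distrib, Finset.sum_mul]
    _ = 0 := by
        rw [htot, one_mul]
        -- reorder each triple sum so g₁ is outer and a' innermost, then kill the ite
        have reorder : ∀ (f : Y → A → G₁ → ℝ),
            (∑ y : Y, ∑ a' : A, ∑ g₁ : G₁, f y a' g₁) =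
              ∑ g₁ : G₁, ∑ y : Y, ∑ a' : A, f y a' g₁ := by
          intro f
          calc (∑ y : Y, ∑ a' : A, ∑ g₁ : G₁, f y a' g₁)
              = ∑ y : Y, ∑ g₁ : G₁, ∑ a' : A, f y a' g₁ :=
                Finset.sum_congr rfl fun y _ => Finset.sum_comm
            _ = ∑ g₁ : G₁, ∑ y : Y, ∑ a' : A, f y a' g₁ := Finset.sum_comm
        rw [reorder, reorder]
        have e1 : (∑ g₁ : G₁, ∑ y : Y, ∑ a' : A,
            (p (y, a', g₁, g₂, b₂) / pG2B2 p g₂ b₂) *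
              ((if a' = a then (1:ℝ) else 0) * (pG1 p g₁ * pB2 p b₂ / pAG1B2 p a g₁ b₂) *
                ((y : ℝ) - m1 p a g₁ b₂))) =
            ∑ g₁ : G₁, pG1 p g₁ * (m2 p a g₁ g₂ b₂ - m1 p a g₁ b₂) := by
          refine Finset.sum_congr rfl fun g₁ _ => ?_
          have inner : ∀ y : Y, (∑ a' : A,
              (p (y, a', g₁, g₂, b₂) / pG2B2 p g₂ b₂) *
                ((if a' = a then (1:ℝ) else 0) * (pG1 p g₁ * pB2 p b₂ / pAG1B2 p a g₁ b₂) *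
                  ((y : ℝ) - m1 p a g₁ b₂))) =
              (pG1 p g₁ * pB2 p b₂ / (pAG1B2 p a g₁ b₂ * pG2B2 p g₂ b₂)) *
                (p (y, a, g₁, g₂, b₂) * ((y : ℝ) - m1 p a g₁ b₂)) := by
            intro y
            simp only [ite_mul, mul_ite, mul_zero, zero_mul, one_mul]
            rw [Finset.sum_ite_eq' Finset.univ a]
            simp only [Finset.mem_univ, if_true]
            field_simp
          rw [Finset.sum_congr rfl fun y _ => inner y, ← Finset.mul_sum, hres1 g₁]
          have hf := hfac g₂ a g₁ b₂
          have h1 := (hAG1B2 a g₁ b₂).ne'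
          have h2 := (hG2B2 g₂ b₂).ne'
          field_simp
          linear_combination (m2 p a g₁ g₂ b₂ - m1 p a g₁ b₂) * pG1 p g₁ * hf
        have e2 : (∑ g₁ : G₁, ∑ y : Y, ∑ a' : A,
            (p (y, a', g₁, g₂, b₂) / pG2B2 p g₂ b₂) *
              ((if a' = a then (1:ℝ) else 0) *
                  (pG1 p g₁ * pG2B2 p g₂ b₂ / pAG1G2B2 p a g₁ g₂ b₂) *
                ((y : ℝ) - m2 p a g₁ g₂ b₂))) = 0 := by
          refine Finset.sum_eq_zero fun g₁ _ => ?_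
          have inner : ∀ y : Y, (∑ a' : A,
              (p (y, a', g₁, g₂, b₂) / pG2B2 p g₂ b₂) *
                ((if a' = a then (1:ℝ) else 0) *
                    (pG1 p g₁ * pG2B2 p g₂ b₂ / pAG1G2B2 p a g₁ g₂ b₂) *
                  ((y : ℝ) - m2 p a g₁ g₂ b₂))) =
              (pG1 p g₁ * pG2B2 p g₂ b₂ /
                  (pAG1G2B2 p a g₁ g₂ b₂ * pG2B2 p g₂ b₂)) *
                (p (y, a, g₁, g₂, b₂) * ((y : ℝ) - m2 p a g₁ g₂ b₂)) := by
            intro y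
            simp only [ite_mul, mul_ite, mul_zero, zero_mul, one_mul]
            rw [Finset.sum_ite_eq' Finset.univ a]
            simp only [Finset.mem_univ, if_true]
            field_simp
          rw [Finset.sum_congr rfl fun y _ => inner y, ← Finset.mul_sum, hres2 g₁, mul_zero]
        rw [e1, e2]
        simp only [mul_sub, Finset.sum_sub_distrib]
        ring

end
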